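/- Let η > 0 and γ ≥ 0, let x_z : ℝ → ℝ be differentiable with |x_z'(t)| ≤ γ for all t, and let c ∈ ℝ. Let x_u : [t₀, ∞) → ℝ be differentiable, satisfy x_u'(t) = η(x_u(t) − x_z(t)) for all t ≥ t₀, and have initial condition x_u(t₀) = c + η ∫_{t₀}^∞ e^{−η(τ−t₀)} x_z(τ) dτ. Then for every t ≥ t₀, x_u(t) = c·e^{η(t−t₀)} + η ∫_{t}^∞ e^{−η(τ−t)} x_z(τ) dτ. Consequently, if c ≠ 0 then |x_u(t) − x_z(t)| → ∞ as t → ∞; hence the stability condition identifies the unique initialization of x_u for which x_u − x_z remains bounded. -/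

import Mathlib

open MeasureTheory Real Filter

private lemma int_exp' (η t : ℝ) (hη : 0 < η) :
    IntegrableOn (fun τ => Real.exp (-η * (τ - t))) (Set.Ioi t) := by
  have h : (fun τ => Real.exp (-η * (τ - t)))
      = fun τ => Real.exp (η * t) * Real.exp (-η * τ) := by
    funext τ; rw [← Real.exp_add]; ring_nf
  rw [h]
  exact (exp_neg_integrableOn_Ioi t hη).const_mul _

private lemma int_linexp' (η t : ℝ) (hη : 0 < η) :
    IntegrableOn (fun τ => (τ - t) * Real.exp (-η * (τ - t))) (Set.Ioi t) := by
  have hmaj : IntegrableOn (fun τ => (2/η) * Real.exp (-(η/2) * (τ - t))) (Set.Ioi t) :=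
    (int_exp' (η/2) t (by positivity)).const_mul _
  apply Integrable.mono hmaj
  · exact (Continuous.mul (by continuity) (by continuity)).aestronglyMeasurable
  · filter_upwards [ae_restrict_mem measurableSet_Ioi] with τ hτ
    have h1 : (0:ℝ) ≤ τ - t := by simp at hτ; linarith
    have h2 : (η/2) * (τ - t) ≤ Real.exp ((η/2) * (τ - t)) := by
      have := Real.add_one_le_exp ((η/2) * (τ - t)); linarith
    have h3 : (τ - t) ≤ (2/η) * Real.exp ((η/2) * (τ - t)) := by
      rw [div_mul_eq_mul_div, le_div_iff₀ hη]
      nlinarith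
    have h4 : 0 < Real.exp (-η * (τ - t)) := Real.exp_pos _
    rw [Real.norm_eq_abs, Real.norm_eq_abs, abs_of_nonneg (by positivity),
        abs_of_nonneg (by positivity)]
    calc (τ - t) * Real.exp (-η * (τ - t))
        ≤ (2/η) * Real.exp ((η/2) * (τ - t)) * Real.exp (-η * (τ - t)) := by
          exact mul_le_mul_of_nonneg_right h3 h4.le
      _ = (2/η) * Real.exp (-(η/2) * (τ - t)) := by
          rw [mul_assoc, ← Real.exp_add]; ring_nf

private lemma val_exp (η t : ℝ) (hη : 0 < η) :
    ∫ τ in Set.Ioi t, Real.exp (-η * (τ - t)) = 1/η := by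
  have hderiv : ∀ s ∈ Set.Ioi t, HasDerivAt (fun s => -(1/η) * Real.exp (-η * (s - t)))
      (Real.exp (-η * (s - t))) s := by
    intro s _
    have h1 : HasDerivAt (fun s : ℝ => -η * (s - t)) (-η) s := by
      simpa using ((hasDerivAt_id s).sub_const t).const_mul (-η)
    have h2 := h1.exp
    have h3 := h2.const_mul (-(1/η))
    refine h3.congr_deriv ?_
    field_simp
  have htend : Tendsto (fun s => -(1/η) * Real.exp (-η * (s - t))) atTop (nhds 0) := by
    have hu : Tendsto (fun s : ℝ => -η * (s - t)) atTop atBot := by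
      apply Tendsto.const_mul_atTop_of_neg (by linarith : -η < 0)
      exact tendsto_atTop_add_const_right atTop (-t) tendsto_id
    have := (Real.tendsto_exp_atBot).comp hu
    simpa using (this.const_mul (-(1/η)))
  have hcont : ContinuousWithinAt (fun s => -(1/η) * Real.exp (-η * (s - t))) (Set.Ici t) t :=
    (Continuous.continuousWithinAt (by continuity))
  have := integral_Ioi_of_hasDerivAt_of_tendsto hcont hderiv (int_exp' η t hη) htend
  rw [this]; simp

private lemma val_linexp (η t : ℝ) (hη : 0 < η) :
    ∫ τ in Set.Ioi t, (τ - t) * Real.exp (-η * (τ - t)) = 1/η^2 := by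
  set F : ℝ → ℝ := fun s => (-(s - t)/η - 1/η^2) * Real.exp (-η * (s - t)) with hF
  have hderiv : ∀ s ∈ Set.Ioi t, HasDerivAt F ((s - t) * Real.exp (-η * (s - t))) s := by
    intro s _
    have h1 : HasDerivAt (fun s : ℝ => -η * (s - t)) (-η) s := by
      simpa using ((hasDerivAt_id s).sub_const t).const_mul (-η)
    have h2 := h1.exp
    have h3 : HasDerivAt (fun s : ℝ => -(s - t)/η - 1/η^2) (-1/η) s := by
      have h := (((hasDerivAt_id s).sub_const t).neg.div_const η).sub_const (1/η^2)
      exact h.congr_deriv (by ring)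
    have h4 := h3.mul h2
    refine h4.congr_deriv ?_
    field_simp
    ring
  have hu : Tendsto (fun s : ℝ => η * (s - t)) atTop atTop := by
    apply Tendsto.const_mul_atTop hη
    exact tendsto_atTop_add_const_right atTop (-t) tendsto_id
  have htend : Tendsto F atTop (nhds 0) := by
    have hg : Tendsto (fun u : ℝ => -(1/η^2) * (u * Real.exp (-u)) - (1/η^2) * Real.exp (-u))
        atTop (nhds 0) := by
      have h1 := Real.tendsto_pow_mul_exp_neg_atTop_nhds_zero 1
      simp only [pow_one] at h1
      have h2 : Tendsto (fun u : ℝ => Real.exp (-u)) atTop (nhds 0) :=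
        Real.tendsto_exp_atBot.comp tendsto_neg_atTop_atBot
      have := ((h1.const_mul (-(1/η^2))).sub (h2.const_mul (1/η^2)))
      simpa using this
    have := hg.comp hu
    apply this.congr
    intro s
    simp only [Function.comp, hF]
    rw [show -(η * (s-t)) = -η * (s-t) by ring]
    field_simp
  have hcont : ContinuousWithinAt F (Set.Ici t) t :=
    (Continuous.continuousWithinAt (by fun_prop))
  have := integral_Ioi_of_hasDerivAt_of_tendsto hcont hderiv (int_linexp' η t hη) htend
  rw [this, hF]
  norm_num

private lemma int_prod' (η γ t : ℝ) (hη : 0 < η) (hγ : 0 ≤ γ) (xz : ℝ → ℝ)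
    (hc : Continuous xz) (hlip : ∀ a b : ℝ, |xz a - xz b| ≤ γ * |a - b|) :
    IntegrableOn (fun τ => Real.exp (-η * (τ - t)) * xz τ) (Set.Ioi t) := by
  have hmaj : IntegrableOn
      (fun τ => |xz t| * Real.exp (-η * (τ - t)) + γ * ((τ - t) * Real.exp (-η * (τ - t))))
      (Set.Ioi t) :=
    ((int_exp' η t hη).const_mul _).add ((int_linexp' η t hη).const_mul _)
  apply Integrable.mono hmaj
  · exact ((by continuity : Continuous fun τ => Real.exp (-η * (τ - t))).mul
      hc).aestronglyMeasurable
  · filter_upwards [ae_restrict_mem measurableSet_Ioi] with τ hτ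
    have h1 : (0:ℝ) ≤ τ - t := by simp at hτ; linarith
    have he : (0:ℝ) < Real.exp (-η * (τ - t)) := Real.exp_pos _
    have hb : |xz τ| ≤ |xz t| + γ * (τ - t) := by
      have h2 := hlip τ t
      rw [abs_of_nonneg h1] at h2
      have h3 : |xz τ| ≤ |xz t| + |xz τ - xz t| := by
        have := abs_add_le (xz t) (xz τ - xz t)
        simpa using this
      linarith
    rw [Real.norm_eq_abs, Real.norm_eq_abs, abs_mul, abs_of_pos he]
    refine le_trans ?_ (le_abs_self _)
    calc Real.exp (-η * (τ - t)) * |xz τ|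
        ≤ Real.exp (-η * (τ - t)) * (|xz t| + γ * (τ - t)) :=
          mul_le_mul_of_nonneg_left hb he.le
      _ = |xz t| * Real.exp (-η * (τ - t)) + γ * ((τ - t) * Real.exp (-η * (τ - t))) := by ring

/-- If `x_u' = η(x_u − x_z)` for `t ≥ t₀` with
`x_u(t₀) = c + η ∫_{t₀}^∞ e^{−η(τ−t₀)} x_z(τ) dτ`, then
`x_u(t) = c·e^{η(t−t₀)} + η ∫_{t}^∞ e^{−η(τ−t)} x_z(τ) dτ` for all `t ≥ t₀`; consequently,
if `c ≠ 0` then `|x_u − x_z| → ∞` as `t → ∞`. -/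
theorem stmt_3 (η γ t₀ c : ℝ) (hη : 0 < η) (hγ : 0 ≤ γ)
    (xz xu : ℝ → ℝ)
    (hxz : Differentiable ℝ xz) (hxz' : ∀ t, |deriv xz t| ≤ γ)
    (hode : ∀ t, t₀ ≤ t → HasDerivAt xu (η * (xu t - xz t)) t)
    (hinit : xu t₀ = c + η * ∫ τ in Set.Ioi t₀, Real.exp (-η * (τ - t₀)) * xz τ) :
    (∀ t, t₀ ≤ t →
      xu t = c * Real.exp (η * (t - t₀))
        + η * ∫ τ in Set.Ioi t, Real.exp (-η * (τ - t)) * xz τ) ∧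
    (c ≠ 0 → Tendsto (fun t => |xu t - xz t|) atTop atTop) := by
  have hcxz : Continuous xz := hxz.continuous
  have hlip : ∀ a b : ℝ, |xz a - xz b| ≤ γ * |a - b| := by
    intro a b
    have hL : LipschitzWith γ.toNNReal xz := by
      apply lipschitzWith_of_nnnorm_deriv_le hxz
      intro x
      rw [← NNReal.coe_le_coe, coe_nnnorm, Real.coe_toNNReal _ hγ, Real.norm_eq_abs]
      exact hxz' x
    have h := hL.dist_le_mul a b
    rwa [Real.dist_eq, Real.dist_eq, Real.coe_toNNReal _ hγ] at h
  have hint : ∀ t : ℝ, IntegrableOn (fun τ => Real.exp (-η * (τ - t)) * xz τ) (Set.Ioi t) :=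
    fun t => int_prod' η γ t hη hγ xz hcxz hlip
  have key : ∀ t, t₀ ≤ t →
      xu t = c * Real.exp (η * (t - t₀))
        + η * ∫ τ in Set.Ioi t, Real.exp (-η * (τ - t)) * xz τ := by
    intro t ht
    set I : ℝ := ∫ τ in Set.Ioi t, Real.exp (-η * (τ - t)) * xz τ with hI
    set f : ℝ → ℝ := fun τ => Real.exp (-η * (τ - t₀)) * xz τ with hf
    have hfc : Continuous f := by fun_prop
    set g : ℝ → ℝ := fun s => Real.exp (-η * (s - t₀)) * xu s + η * ∫ τ in t₀..s, f τ with hg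
    have hgder : ∀ s, t₀ ≤ s → HasDerivAt g 0 s := by
      intro s hs
      have h1 : HasDerivAt (fun s : ℝ => Real.exp (-η * (s - t₀)))
          (Real.exp (-η * (s - t₀)) * (-η)) s :=
        HasDerivAt.exp (by simpa using ((hasDerivAt_id s).sub_const t₀).const_mul (-η))
      have h2 := h1.mul (hode s hs)
      have h3 : HasDerivAt (fun u => ∫ τ in t₀..u, f τ) (f s) s :=
        intervalIntegral.integral_hasDerivAt_right (hfc.intervalIntegrable _ _)
          (hfc.stronglyMeasurable.stronglyMeasurableAtFilter) hfc.continuousAt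
      have h4 := h2.add (h3.const_mul η)
      refine h4.congr_deriv ?_
      simp only [hf]
      ring
    have hconst : g t = g t₀ := by
      have hcont : ContinuousOn g (Set.Icc t₀ t) := fun x hx =>
        ((hgder x hx.1).continuousAt).continuousWithinAt
      exact constant_of_has_deriv_right_zero hcont
        (fun x hx => ((hgder x hx.1).hasDerivWithinAt)) t (Set.mem_Icc.mpr ⟨ht, le_rfl⟩)
    have hfIoi : IntegrableOn f (Set.Ioi t) := by
      have h : f = fun τ => Real.exp (-η * (t - t₀)) * (Real.exp (-η * (τ - t)) * xz τ) := by
        funext τ; simp only [hf]; rw [← mul_assoc, ← Real.exp_add]; ring_nf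
      rw [h]
      exact (hint t).const_mul _
    have hfIoc : IntegrableOn f (Set.Ioc t₀ t) :=
      (hfc.integrableOn_Icc).mono_set Set.Ioc_subset_Icc_self
    have hsplit : ∫ τ in Set.Ioi t₀, f τ = (∫ τ in t₀..t, f τ) + ∫ τ in Set.Ioi t, f τ := by
      rw [intervalIntegral.integral_of_le ht,
        ← setIntegral_union (Set.Ioc_disjoint_Ioi le_rfl) measurableSet_Ioi hfIoc hfIoi,
        Set.Ioc_union_Ioi_eq_Ioi ht]
    have hshift : ∫ τ in Set.Ioi t, f τ = Real.exp (-η * (t - t₀)) * I := by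
      have h : ∀ τ, f τ = Real.exp (-η * (t - t₀)) * (Real.exp (-η * (τ - t)) * xz τ) := by
        intro τ; simp only [hf]; rw [← mul_assoc, ← Real.exp_add]; ring_nf
      simp only [h]
      rw [integral_const_mul]
    have h5 : Real.exp (-η * (t - t₀)) * xu t = c + η * (Real.exp (-η * (t - t₀)) * I) := by
      have hgt₀ : g t₀ = xu t₀ := by simp [hg]
      have hgt : g t = Real.exp (-η * (t - t₀)) * xu t + η * ∫ τ in t₀..t, f τ := rfl
      have hIoi : (∫ τ in Set.Ioi t₀, f τ)
          = (∫ τ in t₀..t, f τ) + Real.exp (-η * (t - t₀)) * I := by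
        rw [hsplit, hshift]
      rw [hgt] at hconst
      rw [hgt₀, hinit] at hconst
      have : (∫ τ in Set.Ioi t₀, Real.exp (-η * (τ - t₀)) * xz τ) = ∫ τ in Set.Ioi t₀, f τ := rfl
      rw [this, hIoi] at hconst
      linarith [hconst]
    have hAB : Real.exp (-η * (t - t₀)) * Real.exp (η * (t - t₀)) = 1 := by
      rw [← Real.exp_add]; ring_nf; exact Real.exp_zero
    linear_combination Real.exp (η * (t - t₀)) * h5 + (η * I - xu t) * hAB
  refine ⟨key, fun hc => ?_⟩
  have key2 : ∀ t, t₀ ≤ t → |c| * Real.exp (η * (t - t₀)) - γ/η ≤ |xu t - xz t| := by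
    intro t ht
    set I : ℝ := ∫ τ in Set.Ioi t, Real.exp (-η * (τ - t)) * xz τ with hI
    have hdiff : η * I - xz t
        = η * ∫ τ in Set.Ioi t, Real.exp (-η * (τ - t)) * (xz τ - xz t) := by
      have h1 : ∫ τ in Set.Ioi t, Real.exp (-η * (τ - t)) * (xz τ - xz t)
          = I - (∫ τ in Set.Ioi t, Real.exp (-η * (τ - t))) * xz t := by
        rw [← integral_mul_const, ← integral_sub (hint t) ((int_exp' η t hη).mul_const _)]
        congr 1; funext τ; ring
      rw [h1, val_exp η t hη]
      field_simp
    have hbound : |η * ∫ τ in Set.Ioi t, Real.exp (-η * (τ - t)) * (xz τ - xz t)| ≤ γ/η := by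
      rw [abs_mul, abs_of_pos hη]
      have hnorm : ‖∫ τ in Set.Ioi t, Real.exp (-η * (τ - t)) * (xz τ - xz t)‖
          ≤ ∫ τ in Set.Ioi t, γ * ((τ - t) * Real.exp (-η * (τ - t))) := by
        apply norm_integral_le_of_norm_le ((int_linexp' η t hη).const_mul γ)
        filter_upwards [ae_restrict_mem measurableSet_Ioi] with τ hτ
        have h1 : (0:ℝ) ≤ τ - t := by simp at hτ; linarith
        have he : (0:ℝ) < Real.exp (-η * (τ - t)) := Real.exp_pos _
        rw [Real.norm_eq_abs, abs_mul, abs_of_pos he]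
        have h2 := hlip τ t
        rw [abs_of_nonneg h1] at h2
        calc Real.exp (-η * (τ - t)) * |xz τ - xz t|
            ≤ Real.exp (-η * (τ - t)) * (γ * (τ - t)) := mul_le_mul_of_nonneg_left h2 he.le
          _ = γ * ((τ - t) * Real.exp (-η * (τ - t))) := by ring
      rw [Real.norm_eq_abs] at hnorm
      have hval : ∫ τ in Set.Ioi t, γ * ((τ - t) * Real.exp (-η * (τ - t))) = γ / η^2 := by
        rw [integral_const_mul, val_linexp η t hη]
        field_simp
      rw [hval] at hnorm
      calc η * |∫ τ in Set.Ioi t, Real.exp (-η * (τ - t)) * (xz τ - xz t)|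
          ≤ η * (γ / η^2) := mul_le_mul_of_nonneg_left hnorm hη.le
        _ = γ / η := by field_simp
    have hformula := key t ht
    have heq : xu t - xz t = c * Real.exp (η * (t - t₀))
        + η * ∫ τ in Set.Ioi t, Real.exp (-η * (τ - t)) * (xz τ - xz t) := by
      rw [hformula]; rw [← hI]; linarith [hdiff]
    rw [heq]
    have habs : |c * Real.exp (η * (t - t₀))|
        - |η * ∫ τ in Set.Ioi t, Real.exp (-η * (τ - t)) * (xz τ - xz t)|
        ≤ |c * Real.exp (η * (t - t₀))
          + η * ∫ τ in Set.Ioi t, Real.exp (-η * (τ - t)) * (xz τ - xz t)| := by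
      have := abs_add_le (c * Real.exp (η * (t - t₀))
          + η * ∫ τ in Set.Ioi t, Real.exp (-η * (τ - t)) * (xz τ - xz t))
        (-(η * ∫ τ in Set.Ioi t, Real.exp (-η * (τ - t)) * (xz τ - xz t)))
      simp only [add_neg_cancel_right, abs_neg] at this
      linarith
    rw [abs_mul, abs_of_pos (Real.exp_pos _)] at habs
    linarith
  apply tendsto_atTop_mono' atTop ?_ ?_
  · exact (fun t => |c| * Real.exp (η * (t - t₀)) - γ/η)
  · filter_upwards [eventually_ge_atTop t₀] with t ht
    exact key2 t ht
  · apply tendsto_atTop_add_const_right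
    apply Tendsto.const_mul_atTop (abs_pos.mpr hc)
    apply Real.tendsto_exp_atTop.comp
    apply Tendsto.const_mul_atTop hη
    exact tendsto_atTop_add_const_right atTop (-t₀) tendsto_id
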